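/- For every integer n ≥ 1, the partial-fraction coefficients of R_n satisfy the symmetry a_{n,i,k} = (−1)^{i+1} a_{n,i,Mn−k} for all 1 ≤ i ≤ s and δ_1 n ≤ k ≤ (M−δ_1)n. Consequently ρ_{n,i} = 0 for every even i with 2 ≤ i ≤ s, and also ρ_{n,1} = 0. -/

import Mathlib

/-- The Pochhammer symbol `(x)ₖ = x(x+1)⋯(x+k-1)` for a real `x`. -/
noncomputable def poch (x : ℝ) (k : ℕ) : ℝ := ∏ m ∈ Finset.range k, (x + m)

/-- The rational function
`Rₙ(t) = (∏_{j=1}^J ((M-2δⱼ)n)!^{s/J} / n!^{2r}) · (2t+Mn) · (t-rn)_{rn} (t+Mn+1)_{rn}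
  / ∏_{j=1}^J (t+δⱼn)_{(M-2δⱼ)n+1}^{s/J}`. -/
noncomputable def Rfun (J M : ℕ) (δ : ℕ → ℕ) (s r n : ℕ) (t : ℝ) : ℝ :=
  (∏ j ∈ Finset.Icc 1 J, (((M - 2 * δ j) * n).factorial : ℝ) ^ (s / J)) /
      (n.factorial : ℝ) ^ (2 * r)
    * (2 * t + (M : ℝ) * n) * poch (t - (r : ℝ) * n) (r * n)
    * poch (t + (M : ℝ) * n + 1) (r * n)
    / ∏ j ∈ Finset.Icc 1 J, poch (t + (δ j : ℝ) * n) ((M - 2 * δ j) * n + 1) ^ (s / J)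


open Finset Filter Polynomial Topology

lemma poch_succ (x : ℝ) (k : ℕ) : poch x (k+1) = poch x k * (x + k) := by
  simp [poch, Finset.prod_range_succ]

lemma poch_succ' (x : ℝ) (k : ℕ) : poch x (k+1) = x * poch (x+1) k := by
  rw [poch, Finset.prod_range_succ', poch, mul_comm]
  simp only [Nat.cast_zero, add_zero]
  congr 1
  exact Finset.prod_congr rfl fun m _ => by push_cast; ring

lemma poch_reflect (y : ℝ) (k : ℕ) : poch (-y) k = (-1)^k * poch (y - k + 1) k := by
  induction k with
  | zero => simp [poch]
  | succ k ih =>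
      rw [poch_succ, ih]
      have : poch (y - (k+1:ℕ) + 1) (k+1) = (y - k) * poch (y - k + 1) k := by
        rw [show (y - (k+1:ℕ) + 1) = y - k by push_cast; ring, poch_succ']
      rw [this]
      ring

lemma poch_eval (c : ℝ) (k : ℕ) (t : ℝ) :
    poch (t + c) k = (∏ m ∈ Finset.range k, (X + C (c + m))).eval t := by
  rw [poch, eval_prod]
  refine Finset.prod_congr rfl fun m _ => ?_
  simp
  ring

lemma pf_unique (S : Finset ℕ) : ∀ (s : ℕ) (b : ℕ → ℕ → ℝ),
    (∀ t : ℝ, (∀ k ∈ S, t + (k:ℝ) ≠ 0) →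
      ∑ i ∈ Finset.Icc 1 s, ∑ k ∈ S, b i k / (t + (k:ℝ))^i = 0) →
    ∀ i ∈ Finset.Icc 1 s, ∀ k ∈ S, b i k = 0 := by
  intro s
  induction s with
  | zero => intro b h i hi; simp at hi
  | succ s ih =>
    intro b h
    set U : Set ℝ := {t | ∀ k ∈ S, t + (k:ℝ) ≠ 0} with hU
    have hUmem : ∀ k₀ ∈ S, U ∈ 𝓝[≠] (-(k₀:ℝ)) := by
      intro k₀ hk₀
      set x : ℝ := -(k₀:ℝ)
      set T : Set ℝ := ↑(S.image fun k : ℕ => -(k:ℝ)) with hT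
      have hTfin : (T \ {x}).Finite := ((S.image fun k : ℕ => -(k:ℝ)).finite_toSet.diff)
      have hV : IsOpen (T \ {x})ᶜ := hTfin.isClosed.isOpen_compl
      have hx : x ∈ (T \ {x})ᶜ := by simp
      refine Filter.mem_of_superset
        (Filter.inter_mem (mem_nhdsWithin_of_mem_nhds (hV.mem_nhds hx)) self_mem_nhdsWithin) ?_
      rintro t ⟨ht1, ht2⟩ k hk
      intro habs
      have htk : t = -(k:ℝ) := by linarith
      rcases eq_or_ne (-(k:ℝ)) x with hcase | hcase
      · exact ht2 (htk.trans hcase)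
      · exact ht1 ⟨by simp [hT]; exact ⟨k, hk, htk.symm⟩, by rw [← htk] at hcase; exact hcase⟩
    have hne : ∀ k₀ ∈ S, (𝓝[U] (-(k₀:ℝ))).NeBot := by
      intro k₀ hk₀
      have h1 : 𝓝[U ∩ {(-(k₀:ℝ))}ᶜ] (-(k₀:ℝ)) = 𝓝[≠] (-(k₀:ℝ)) :=
        nhdsWithin_inter_of_mem (hUmem k₀ hk₀)
      have h2 : 𝓝[U ∩ {(-(k₀:ℝ))}ᶜ] (-(k₀:ℝ)) ≤ 𝓝[U] (-(k₀:ℝ)) :=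
        nhdsWithin_mono _ Set.inter_subset_left
      rw [h1] at h2
      exact Filter.neBot_of_le h2
    have htop : ∀ k₀ ∈ S, b (s+1) k₀ = 0 := by
      intro k₀ hk₀
      haveI := hne k₀ hk₀
      set x : ℝ := -(k₀:ℝ) with hxdef
      set F : ℝ → ℝ := fun t => (t + k₀)^(s+1) * ∑ i ∈ Finset.Icc 1 (s+1), ∑ k ∈ S, b i k / (t + (k:ℝ))^i with hF
      have h0 : Filter.Tendsto F (𝓝[U] x) (𝓝 0) := by
        have hev : (fun _ : ℝ => (0:ℝ)) =ᶠ[𝓝[U] x] F := by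
          filter_upwards [self_mem_nhdsWithin] with t ht
          show (0:ℝ) = F t
          rw [hF]; simp only; rw [h t ht, mul_zero]
        exact Filter.Tendsto.congr' hev tendsto_const_nhds
      have h1 : Filter.Tendsto F (𝓝[U] x) (𝓝 (b (s+1) k₀)) := by
        have hFeq : ∀ t, F t = ∑ i ∈ Finset.Icc 1 (s+1), ∑ k ∈ S,
            b i k * ((t + k₀)^(s+1) / (t + (k:ℝ))^i) := by
          intro t
          rw [hF]; simp only [Finset.mul_sum]
          exact Finset.sum_congr rfl fun i _ => Finset.sum_congr rfl fun k _ => by ring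
        have hterm : ∀ i ∈ Finset.Icc 1 (s+1), ∀ k ∈ S,
            Filter.Tendsto (fun t => b i k * ((t + (k₀:ℝ))^(s+1) / (t + (k:ℝ))^i)) (𝓝[U] x)
              (𝓝 (if i = s+1 ∧ k = k₀ then b i k else 0)) := by
          intro i hi k hk
          rcases eq_or_ne k k₀ with rfl | hkk
          · -- k = k₀ case
            have hiup : i ≤ s + 1 := (Finset.mem_Icc.mp hi).2
            have hcg : ∀ᶠ t in 𝓝[U] x, b i k * (t + (k:ℝ))^(s+1-i)
                = b i k * ((t + (k:ℝ))^(s+1) / (t + (k:ℝ))^i) := by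
              filter_upwards [self_mem_nhdsWithin] with t ht
              rw [pow_sub₀ _ (ht k hk) hiup, div_eq_mul_inv]
            refine Filter.Tendsto.congr' hcg ?_
            have hc : Filter.Tendsto (fun t : ℝ => b i k * (t + (k:ℝ))^(s+1-i)) (𝓝 x)
                (𝓝 (b i k * (x + (k:ℝ))^(s+1-i))) :=
              ((continuous_const.mul ((continuous_id.add continuous_const).pow _)).tendsto x)
            have hx0 : x + (k:ℝ) = 0 := by rw [hxdef]; ring
            rcases eq_or_lt_of_le hiup with hcase | hcase
            · rw [show (if i = s+1 ∧ k = k then b i k else 0)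
                  = b i k * (x + (k:ℝ))^(s+1-i) by rw [hcase]; simp]
              exact hc.mono_left nhdsWithin_le_nhds
            · have hlt : i < s + 1 := hcase
              rw [show (if i = s+1 ∧ k = k then b i k else 0)
                  = b i k * (x + (k:ℝ))^(s+1-i) by
                rw [hx0, zero_pow (by omega), mul_zero]; simp [Nat.ne_of_lt hlt]]
              exact hc.mono_left nhdsWithin_le_nhds
          · -- k ≠ k₀
            have hkk' : (k:ℝ) ≠ (k₀:ℝ) := by exact_mod_cast hkk
            have hden : x + (k:ℝ) ≠ 0 := by
              rw [hxdef]; intro habs; apply hkk'; linarith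
            have hc : Filter.Tendsto (fun t : ℝ => b i k * ((t + (k₀:ℝ))^(s+1) / (t + (k:ℝ))^i))
                (𝓝 x) (𝓝 (b i k * ((x + (k₀:ℝ))^(s+1) / (x + (k:ℝ))^i))) := by
              apply Filter.Tendsto.mul tendsto_const_nhds
              apply Filter.Tendsto.div
                (((continuous_id.add continuous_const).pow _).tendsto x)
                (((continuous_id.add continuous_const).pow _).tendsto x)
              exact pow_ne_zero _ hden
            have hx0 : x + (k₀:ℝ) = 0 := by rw [hxdef]; ring
            have : b i k * ((x + (k₀:ℝ))^(s+1) / (x + (k:ℝ))^i) = 0 := by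
              rw [hx0, zero_pow (Nat.succ_ne_zero s), zero_div, mul_zero]
            rw [this] at hc
            have : (if i = s+1 ∧ k = k₀ then b i k else 0) = 0 := by simp [hkk]
            rw [this]
            exact hc.mono_left nhdsWithin_le_nhds
        have hsum : Filter.Tendsto F (𝓝[U] x)
            (𝓝 (∑ i ∈ Finset.Icc 1 (s+1), ∑ k ∈ S, if i = s+1 ∧ k = k₀ then b i k else 0)) := by
          have := Filter.Tendsto.congr (fun t => (hFeq t).symm)
            (tendsto_finset_sum _ (fun i hi => tendsto_finset_sum _ (fun k hk => hterm i hi k hk)))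
          exact this
        have hval : (∑ i ∈ Finset.Icc 1 (s+1), ∑ k ∈ S,
            if i = s+1 ∧ k = k₀ then b i k else 0) = b (s+1) k₀ := by
          rw [Finset.sum_eq_single_of_mem (s+1) (by simp)]
          · simp only [true_and]
            rw [Finset.sum_eq_single_of_mem k₀ hk₀]
            · simp
            · intro k hk hkk; simp [hkk]
          · intro i hi his; simp [his]
        rwa [hval] at hsum
      exact tendsto_nhds_unique h1 h0
    have hrest : ∀ t : ℝ, (∀ k ∈ S, t + (k:ℝ) ≠ 0) →
        ∑ i ∈ Finset.Icc 1 s, ∑ k ∈ S, b i k / (t + (k:ℝ))^i = 0 := by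
      intro t ht
      have := h t ht
      rw [Finset.sum_Icc_succ_top (by omega : 1 ≤ s + 1)] at this
      have hz : ∑ k ∈ S, b (s+1) k / (t + (k:ℝ))^(s+1) = 0 :=
        Finset.sum_eq_zero fun k hk => by rw [htop k hk, zero_div]
      rw [hz, add_zero] at this
      exact this
    intro i hi k hk
    rcases eq_or_ne i (s+1) with rfl | his
    · exact htop k hk
    · refine ih b hrest i ?_ k hk
      rw [Finset.mem_Icc] at hi ⊢
      omega


lemma tendsto_t_div_pow (k : ℕ) (i : ℕ) (hi : 1 ≤ i) :
    Filter.Tendsto (fun t : ℝ => t / (t + (k:ℝ))^i) Filter.atTop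
      (𝓝 (if i = 1 then 1 else 0)) := by
  rcases eq_or_ne i 1 with rfl | hne
  · simp only [if_pos rfl, pow_one]
    have h := Polynomial.div_tendsto_leadingCoeff_div_of_degree_eq (X : ℝ[X]) (X + C (k:ℝ))
      (by rw [degree_X, degree_X_add_C])
    rw [leadingCoeff_X, (monic_X_add_C (k:ℝ)).leadingCoeff, div_one] at h
    refine h.congr fun t => ?_
    simp
  · rw [if_neg hne]
    have hdlt : (X : ℝ[X]).degree < ((X + C (k:ℝ))^i).degree := by
      apply degree_lt_degree
      rw [natDegree_X, natDegree_pow, natDegree_X_add_C, mul_one]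
      omega
    have h := Polynomial.div_tendsto_zero_of_degree_lt (X : ℝ[X]) ((X + C (k:ℝ))^i) hdlt
    refine h.congr fun t => ?_
    simp

lemma Rfun_reflect (J M : ℕ) (δ : ℕ → ℕ) (hJ : 1 ≤ J)
    (hδM : ∀ j ∈ Finset.Icc 1 J, 2 * δ j < M)
    (s r n : ℕ) (hsJ : 2 * J ∣ s) (t : ℝ) :
    Rfun J M δ s r n (-((M:ℝ)*n) - t) = - Rfun J M δ s r n t := by
  obtain ⟨q, hq⟩ := hsJ
  have he : s / J = 2 * q := by
    subst hq
    rw [show 2 * J * q = J * (2 * q) by ring, Nat.mul_div_cancel_left _ (by omega)]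
  have h1 : poch ((-((M:ℝ)*n) - t) - (r:ℝ)*n) (r*n)
      = (-1:ℝ)^(r*n) * poch (t + (M:ℝ)*n + 1) (r*n) := by
    rw [show (-((M:ℝ)*n) - t) - (r:ℝ)*n = -(t + (M:ℝ)*n + (r*n : ℕ)) by push_cast; ring,
      poch_reflect]
    congr 2
    push_cast; ring
  have h2 : poch ((-((M:ℝ)*n) - t) + (M:ℝ)*n + 1) (r*n)
      = (-1:ℝ)^(r*n) * poch (t - (r:ℝ)*n) (r*n) := by
    rw [show (-((M:ℝ)*n) - t) + (M:ℝ)*n + 1 = -(t - 1) by ring, poch_reflect]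
    congr 2
    push_cast; ring
  have h3 : ∀ j ∈ Finset.Icc 1 J,
      poch ((-((M:ℝ)*n) - t) + (δ j:ℝ)*n) ((M - 2*δ j)*n + 1) ^ (s/J)
        = poch (t + (δ j:ℝ)*n) ((M - 2*δ j)*n + 1) ^ (s/J) := by
    intro j hj
    have hd : 2 * δ j ≤ M := (hδM j hj).le
    rw [show (-((M:ℝ)*n) - t) + (δ j:ℝ)*n = -(t + ((M:ℝ) - δ j)*n) by ring, poch_reflect]
    have harg : (t + ((M:ℝ) - (δ j:ℝ))*n) - (((M - 2*δ j)*n + 1 : ℕ):ℝ) + 1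
        = t + (δ j:ℝ)*n := by
      push_cast [Nat.cast_sub hd]
      ring
    rw [harg, mul_pow, ← pow_mul, he,
      show ((M - 2*δ j)*n + 1) * (2*q) = 2 * (((M - 2*δ j)*n + 1) * q) by ring]
    rw [Even.neg_one_pow ⟨((M - 2*δ j)*n + 1) * q, by ring⟩, one_mul]
  unfold Rfun
  rw [h1, h2, Finset.prod_congr rfl h3]
  rw [show -((∏ j ∈ Finset.Icc 1 J, (((M - 2 * δ j) * n).factorial : ℝ) ^ (s / J)) /
      (n.factorial : ℝ) ^ (2 * r)
    * (2 * t + (M : ℝ) * n) * poch (t - (r : ℝ) * n) (r * n)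
    * poch (t + (M : ℝ) * n + 1) (r * n)
    / ∏ j ∈ Finset.Icc 1 J, poch (t + (δ j : ℝ) * n) ((M - 2 * δ j) * n + 1) ^ (s / J))
    = (-((∏ j ∈ Finset.Icc 1 J, (((M - 2 * δ j) * n).factorial : ℝ) ^ (s / J)) /
      (n.factorial : ℝ) ^ (2 * r)
    * (2 * t + (M : ℝ) * n) * poch (t - (r : ℝ) * n) (r * n)
    * poch (t + (M : ℝ) * n + 1) (r * n))
    / ∏ j ∈ Finset.Icc 1 J, poch (t + (δ j : ℝ) * n) ((M - 2 * δ j) * n + 1) ^ (s / J))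
    from (neg_div _ _).symm]
  congr 1
  have hsq : ((-1:ℝ)^(r*n*2)) = 1 := Even.neg_one_pow ⟨r*n, by ring⟩
  set c := (∏ j ∈ Finset.Icc 1 J, (((M - 2 * δ j) * n).factorial : ℝ) ^ (s / J)) /
      (n.factorial : ℝ) ^ (2 * r)
  set A := poch (t - (r : ℝ) * n) (r * n)
  set B := poch (t + (M : ℝ) * n + 1) (r * n)
  linear_combination (-(c*((M:ℝ)*n + 2*t)*A*B)) * hsq

lemma Rfun_mul_tendsto_zero (J M : ℕ) (δ : ℕ → ℕ) (s r n : ℕ)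
    (hdeg : (1 + 2 * (r * n) + 2 : ℤ) ≤
      ((s / J : ℕ) : ℤ) * ∑ j ∈ Finset.Icc 1 J, (((M - 2 * δ j) * n + 1 : ℕ) : ℤ)) :
    Filter.Tendsto (fun t => t * Rfun J M δ s r n t) Filter.atTop (𝓝 0) := by
  set c : ℝ := (∏ j ∈ Finset.Icc 1 J, (((M - 2 * δ j) * n).factorial : ℝ) ^ (s / J)) /
      (n.factorial : ℝ) ^ (2 * r) with hc
  have hcpos : 0 < c := by
    apply div_pos
    · exact Finset.prod_pos fun j _ => pow_pos (by exact_mod_cast (Nat.factorial_pos _)) _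
    · exact pow_pos (by exact_mod_cast (Nat.factorial_pos _)) _
  set Pm : ℝ[X] := X * (X + C ((M:ℝ)*n/2))
      * (∏ m ∈ Finset.range (r*n), (X + C (-((r:ℝ)*n) + m)))
      * (∏ m ∈ Finset.range (r*n), (X + C ((M:ℝ)*n + 1 + m))) with hPm
  set P : ℝ[X] := C (2*c) * Pm with hP
  set Q : ℝ[X] := ∏ j ∈ Finset.Icc 1 J,
      (∏ m ∈ Finset.range ((M - 2*δ j)*n + 1), (X + C ((δ j:ℝ)*n + m)))^(s/J) with hQ
  have hPmmonic : Pm.Monic := by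
    refine ((monic_X.mul (monic_X_add_C _)).mul
      (monic_prod_of_monic _ _ fun m _ => monic_X_add_C _)).mul
      (monic_prod_of_monic _ _ fun m _ => monic_X_add_C _)
  have hQmonic : Q.Monic :=
    monic_prod_of_monic _ _ fun j _ =>
      (monic_prod_of_monic _ _ fun m _ => monic_X_add_C _).pow _
  have hPmdeg : Pm.natDegree = 2 + 2*(r*n) := by
    rw [hPm, Monic.natDegree_mul (by
        exact ((monic_X.mul (monic_X_add_C _)).mul
          (monic_prod_of_monic _ _ fun m _ => monic_X_add_C _)))
      (monic_prod_of_monic _ _ fun m _ => monic_X_add_C _),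
      Monic.natDegree_mul (monic_X.mul (monic_X_add_C _))
        (monic_prod_of_monic _ _ fun m _ => monic_X_add_C _),
      Monic.natDegree_mul monic_X (monic_X_add_C _),
      natDegree_X, natDegree_X_add_C,
      natDegree_prod_of_monic _ _ (fun m _ => monic_X_add_C _),
      natDegree_prod_of_monic _ _ (fun m _ => monic_X_add_C _)]
    simp only [natDegree_X_add_C, Finset.sum_const, Finset.card_range, smul_eq_mul, mul_one]
    ring
  have hQdeg : Q.natDegree = ∑ j ∈ Finset.Icc 1 J, (s/J) * ((M - 2*δ j)*n + 1) := by
    rw [hQ, natDegree_prod_of_monic _ _ (fun j _ =>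
      (monic_prod_of_monic _ _ fun m _ => monic_X_add_C _).pow _)]
    refine Finset.sum_congr rfl fun j _ => ?_
    rw [natDegree_pow, natDegree_prod_of_monic _ _ (fun m _ => monic_X_add_C _)]
    simp only [natDegree_X_add_C, Finset.sum_const, Finset.card_range, smul_eq_mul, mul_one]
  have hdeglt : P.degree < Q.degree := by
    apply degree_lt_degree
    rw [natDegree_C_mul (by positivity : (2*c : ℝ) ≠ 0), hPmdeg, hQdeg]
    have hcast : ((∑ j ∈ Finset.Icc 1 J, (s/J) * ((M - 2*δ j)*n + 1) : ℕ) : ℤ)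
        = ((s / J : ℕ) : ℤ) * ∑ j ∈ Finset.Icc 1 J, (((M - 2 * δ j) * n + 1 : ℕ) : ℤ) := by
      push_cast
      rw [Finset.mul_sum]
    have : (2 + 2*(r*n) : ℤ) < ((∑ j ∈ Finset.Icc 1 J, (s/J) * ((M - 2*δ j)*n + 1) : ℕ) : ℤ) := by
      rw [hcast]; omega
    exact_mod_cast this
  have heq : ∀ t : ℝ, t * Rfun J M δ s r n t = P.eval t / Q.eval t := by
    intro t
    have hPe : P.eval t = c * (2 * t + (M : ℝ) * n) * poch (t - (r : ℝ) * n) (r * n)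
        * poch (t + (M : ℝ) * n + 1) (r * n) * t := by
      rw [show t - (r:ℝ)*n = t + (-((r:ℝ)*n)) by ring,
        show t + (M:ℝ)*n + 1 = t + ((M:ℝ)*n + 1) by ring,
        poch_eval, poch_eval, hP, hPm]
      simp only [eval_mul, eval_C, eval_X, eval_add]
      ring
    have hQe : Q.eval t = ∏ j ∈ Finset.Icc 1 J,
        poch (t + (δ j : ℝ) * n) ((M - 2 * δ j) * n + 1) ^ (s / J) := by
      rw [hQ, eval_prod]
      exact Finset.prod_congr rfl fun j _ => by rw [eval_pow, ← poch_eval]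
    rw [hPe, hQe]
    unfold Rfun
    rw [mul_div_assoc]
    ring
  exact Filter.Tendsto.congr (fun t => (heq t).symm)
    (Polynomial.div_tendsto_zero_of_degree_lt P Q hdeglt)

/-- **Symmetry of the partial-fraction coefficients.** For every `n ≥ 1`,
`aₙ,ᵢ,ₖ = (-1)^{i+1} aₙ,ᵢ,Mn-k` for all `1 ≤ i ≤ s` and `δ₁n ≤ k ≤ (M-δ₁)n`.  Consequently
`ρₙ,ᵢ = 0` for every even `i` with `2 ≤ i ≤ s`, and also `ρₙ,₁ = 0`. -/
theorem partial_fraction_coefficients_symmetry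
    (J M : ℕ) (δ : ℕ → ℕ) (hJ : 1 ≤ J) (hM : 1 ≤ M)
    (hδ : ∀ i ∈ Finset.Icc 1 J, ∀ j ∈ Finset.Icc 1 J, i ≤ j → δ i ≤ δ j)
    (hδM : ∀ j ∈ Finset.Icc 1 J, 2 * δ j < M)
    (s : ℕ) (hs : 0 < s) (hsJ : 2 * J ∣ s)
    (r : ℕ) (hr : r = ⌊(s : ℝ) / Real.log s ^ 2⌋₊)
    (hdeg : ∀ n : ℕ, 1 ≤ n →
      (1 + 2 * (r * n) + 2 : ℤ) ≤
        ((s / J : ℕ) : ℤ) * ∑ j ∈ Finset.Icc 1 J, (((M - 2 * δ j) * n + 1 : ℕ) : ℤ))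
    (n : ℕ) (hn : 1 ≤ n) (a : ℕ → ℕ → ℚ)
    (ha : ∀ t : ℝ, (∀ k ∈ Finset.Icc (δ 1 * n) ((M - δ 1) * n), t + (k : ℝ) ≠ 0) →
      Rfun J M δ s r n t =
        ∑ i ∈ Finset.Icc 1 s, ∑ k ∈ Finset.Icc (δ 1 * n) ((M - δ 1) * n),
          (a i k : ℝ) / (t + (k : ℝ)) ^ i) :
    (∀ i ∈ Finset.Icc 1 s, ∀ k ∈ Finset.Icc (δ 1 * n) ((M - δ 1) * n),
        a i k = (-1) ^ (i + 1) * a i (M * n - k)) ∧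
      (∀ i ∈ Finset.Icc 1 s, Even i →
        ∑ k ∈ Finset.Icc (δ 1 * n) ((M - δ 1) * n), a i k = 0) ∧
      ∑ k ∈ Finset.Icc (δ 1 * n) ((M - δ 1) * n), a 1 k = 0 := by
  classical
  have h1J : (1:ℕ) ∈ Finset.Icc 1 J := Finset.mem_Icc.mpr ⟨le_refl 1, hJ⟩
  have hδ1 : 2 * δ 1 < M := hδM 1 h1J
  set S := Finset.Icc (δ 1 * n) ((M - δ 1) * n) with hS
  have hsub : (M - δ 1) * n = M * n - δ 1 * n := Nat.sub_mul M (δ 1) n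
  have hun : δ 1 * n ≤ M * n := Nat.mul_le_mul_right n (by omega)
  have hmem : ∀ k ∈ S, (M * n - k ∈ S ∧ k ≤ M * n ∧ M * n - (M * n - k) = k) := by
    intro k hk
    rw [hS, Finset.mem_Icc, hsub] at hk
    refine ⟨?_, by omega, by omega⟩
    rw [hS, Finset.mem_Icc, hsub]
    omega
  have hsym : ∀ i ∈ Finset.Icc 1 s, ∀ k ∈ S,
      (a i k : ℝ) - (-1:ℝ)^(i+1) * (a i (M*n - k) : ℝ) = 0 := by
    apply pf_unique
    intro t ht
    have ht' : ∀ k ∈ S, (-((M:ℝ)*n) - t) + (k:ℝ) ≠ 0 := by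
      intro k hk
      obtain ⟨hk', hkle, -⟩ := hmem k hk
      have h2 := ht (M*n - k) hk'
      intro habs
      apply h2
      have hcast : ((M*n - k : ℕ) : ℝ) = (M:ℝ)*n - (k:ℝ) := by
        push_cast [Nat.cast_sub hkle]; ring
      rw [hcast]
      linarith
    have e1 := ha t ht
    have e2 := ha (-((M:ℝ)*n) - t) ht'
    rw [Rfun_reflect J M δ hJ hδM s r n hsJ t] at e2
    have e3 : ∀ i ∈ Finset.Icc 1 s,
        ∑ k ∈ S, (a i k : ℝ)/((-((M:ℝ)*n) - t) + (k:ℝ))^i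
          = ∑ k ∈ S, (-1:ℝ)^i * (a i (M*n - k) : ℝ)/(t + (k:ℝ))^i := by
      intro i _
      refine Finset.sum_nbij' (fun k => M*n - k) (fun k => M*n - k)
        (fun k hk => (hmem k hk).1) (fun k hk => (hmem k hk).1)
        (fun k hk => (hmem k hk).2.2) (fun k hk => (hmem k hk).2.2) ?_
      intro k hk
      obtain ⟨-, hkle, hkk⟩ := hmem k hk
      have hcast : ((M*n - k : ℕ) : ℝ) = (M:ℝ)*n - (k:ℝ) := by
        push_cast [Nat.cast_sub hkle]; ring
      rw [hkk, hcast,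
        show (-((M:ℝ)*n) - t) + (k:ℝ) = -(t + ((M:ℝ)*n - (k:ℝ))) by ring, neg_pow]
      simp only [div_eq_mul_inv, mul_inv, ← inv_pow, inv_neg, inv_one]
      ring
    have e4 : ∑ i ∈ Finset.Icc 1 s, ∑ k ∈ S, (-1:ℝ)^i * (a i (M*n - k) : ℝ)/(t + (k:ℝ))^i
        = - Rfun J M δ s r n t := by
      rw [e2]
      exact (Finset.sum_congr rfl fun i hi => e3 i hi).symm
    calc ∑ i ∈ Finset.Icc 1 s, ∑ k ∈ S,
          ((a i k : ℝ) - (-1:ℝ)^(i+1) * (a i (M*n - k) : ℝ))/(t + (k:ℝ))^i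
        = (∑ i ∈ Finset.Icc 1 s, ∑ k ∈ S, (a i k : ℝ)/(t + (k:ℝ))^i)
          + ∑ i ∈ Finset.Icc 1 s, ∑ k ∈ S, (-1:ℝ)^i * (a i (M*n - k) : ℝ)/(t + (k:ℝ))^i := by
          rw [← Finset.sum_add_distrib]
          refine Finset.sum_congr rfl fun i _ => ?_
          rw [← Finset.sum_add_distrib]
          refine Finset.sum_congr rfl fun k _ => ?_
          rw [pow_succ]
          ring
      _ = Rfun J M δ s r n t + (- Rfun J M δ s r n t) := by rw [← e1, e4]
      _ = 0 := by ring
  have hsymQ : ∀ i ∈ Finset.Icc 1 s, ∀ k ∈ S, a i k = (-1)^(i+1) * a i (M*n - k) := by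
    intro i hi k hk
    have h1 := hsym i hi k hk
    have h2 : (a i k : ℝ) = (((-1:ℚ)^(i+1) * a i (M*n - k) : ℚ) : ℝ) := by
      push_cast
      linarith
    exact_mod_cast h2
  refine ⟨hsymQ, ?_, ?_⟩
  · intro i hi hie
    have h1 : ∑ k ∈ S, a i k = ∑ k ∈ S, (-1:ℚ)^(i+1) * a i (M*n - k) :=
      Finset.sum_congr rfl fun k hk => hsymQ i hi k hk
    have h2 : ∑ k ∈ S, a i (M*n - k) = ∑ k ∈ S, a i k :=
      Finset.sum_nbij' (fun k => M*n - k) (fun k => M*n - k)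
        (fun k hk => (hmem k hk).1) (fun k hk => (hmem k hk).1)
        (fun k hk => (hmem k hk).2.2) (fun k hk => (hmem k hk).2.2)
        (fun k hk => rfl)
    have hneg : (-1:ℚ)^(i+1) = -1 := Odd.neg_one_pow (Even.add_one hie)
    rw [hneg] at h1
    simp only [neg_one_mul, Finset.sum_neg_distrib] at h1
    rw [h2] at h1
    linarith
  · have hlim1 := Rfun_mul_tendsto_zero J M δ s r n (hdeg n hn)
    have hterm : ∀ i ∈ Finset.Icc 1 s, ∀ k ∈ S,
        Filter.Tendsto (fun t : ℝ => (a i k : ℝ) * (t/(t + (k:ℝ))^i)) Filter.atTop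
          (𝓝 ((a i k : ℝ) * (if i = 1 then 1 else 0))) := fun i hi k _ =>
      Filter.Tendsto.mul tendsto_const_nhds (tendsto_t_div_pow k i (Finset.mem_Icc.mp hi).1)
    have hlim2 : Filter.Tendsto
        (fun t : ℝ => t * ∑ i ∈ Finset.Icc 1 s, ∑ k ∈ S, (a i k : ℝ)/(t + (k:ℝ))^i)
        Filter.atTop (𝓝 (∑ k ∈ S, (a 1 k : ℝ))) := by
      have hfe : ∀ t : ℝ, t * ∑ i ∈ Finset.Icc 1 s, ∑ k ∈ S, (a i k : ℝ)/(t + (k:ℝ))^i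
          = ∑ i ∈ Finset.Icc 1 s, ∑ k ∈ S, (a i k : ℝ) * (t/(t + (k:ℝ))^i) := by
        intro t
        rw [Finset.mul_sum]
        refine Finset.sum_congr rfl fun i _ => ?_
        rw [Finset.mul_sum]
        exact Finset.sum_congr rfl fun k _ => by ring
      have hval : ∑ i ∈ Finset.Icc 1 s, ∑ k ∈ S, (a i k : ℝ) * (if i = 1 then 1 else 0)
          = ∑ k ∈ S, (a 1 k : ℝ) := by
        rw [Finset.sum_eq_single_of_mem 1 (Finset.mem_Icc.mpr ⟨le_refl 1, hs⟩)]
        · simp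
        · intro i _ hne
          simp [hne]
      rw [← hval]
      exact Filter.Tendsto.congr (fun t => (hfe t).symm)
        (tendsto_finset_sum _ fun i hi => tendsto_finset_sum _ fun k hk => hterm i hi k hk)
    have hev : (fun t : ℝ => t * Rfun J M δ s r n t)
        =ᶠ[Filter.atTop]
        (fun t : ℝ => t * ∑ i ∈ Finset.Icc 1 s, ∑ k ∈ S, (a i k : ℝ)/(t + (k:ℝ))^i) := by
      filter_upwards [Filter.eventually_gt_atTop 0] with t htpos
      rw [ha t (fun k _ => by positivity)]
    have hzero : (0:ℝ) = ∑ k ∈ S, (a 1 k : ℝ) :=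
      tendsto_nhds_unique (hlim1.congr' hev) hlim2
    have : ((∑ k ∈ S, a 1 k : ℚ) : ℝ) = 0 := by
      push_cast
      linarith
    exact_mod_cast this
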